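/- arXiv:1511.06049 — 7 statements merged into one kernel-verified Lean document; each statement's English description precedes it below -/
import Mathlib

section
/- Let λ > 0 and let v*(t,λ) = max(1 − t/λ, 0) for t ≥ 0. Then for every ℓ ≥ 0, ∫₀^ℓ v*(t,λ) dt equals ℓ − ℓ²/(2λ) if ℓ < λ and equals λ/2 if ℓ ≥ λ; that is, the latent SPL loss of the linear self-paced regularizer equals the minimax concave penalty p^MCP_{γ,λ}(ℓ) with γ = 1. -/
open MeasureTheory

lemma aux_int (lam : ℝ) (hlam : 0 < lam) (ℓ : ℝ) (h0 : 0 ≤ ℓ) (h1 : ℓ ≤ lam) :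
    (∫ t in (0:ℝ)..ℓ, max (1 - t / lam) 0) = ℓ - ℓ ^ 2 / (2 * lam) := by
  have hcong : (∫ t in (0:ℝ)..ℓ, max (1 - t / lam) 0)
      = ∫ t in (0:ℝ)..ℓ, (1 - t / lam) := by
    apply intervalIntegral.integral_congr
    intro t ht
    rw [Set.uIcc_of_le h0] at ht
    have : t / lam ≤ 1 := by
      rw [div_le_one hlam]; exact le_trans ht.2 h1
    simp [max_eq_left]; linarith
  rw [hcong]
  have : (∫ t in (0:ℝ)..ℓ, (1 - t / lam))
      = (∫ t in (0:ℝ)..ℓ, (1:ℝ)) - (∫ t in (0:ℝ)..ℓ, t) / lam := by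
    rw [intervalIntegral.integral_sub (intervalIntegrable_const) ((intervalIntegral.intervalIntegrable_id).div_const _)]
    rw [intervalIntegral.integral_div]
  rw [this, intervalIntegral.integral_const, integral_id]
  field_simp
  rw [smul_eq_mul]; ring

/-- The latent SPL loss of the linear self-paced regularizer equals the
minimax concave penalty (MCP) with `γ = 1`:
`∫₀^ℓ max(1 - t/λ, 0) dt = ℓ - ℓ²/(2λ)` if `ℓ < λ`, and `= λ/2` if `ℓ ≥ λ`. -/
theorem linear_sp_latent_loss_eq_MCP
    (lam : ℝ) (hlam : 0 < lam)
    (vstar : ℝ → ℝ) (hv : ∀ t, vstar t = max (1 - t / lam) 0) :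
    ∀ ℓ : ℝ, 0 ≤ ℓ →
      (∫ t in (0 : ℝ)..ℓ, vstar t) =
        if ℓ < lam then ℓ - ℓ ^ 2 / (2 * lam) else lam / 2 := by
  intro ℓ h0
  have hvf : (fun t => vstar t) = fun t => max (1 - t / lam) 0 := funext hv
  simp only [hvf]
  by_cases hc : ℓ < lam
  · rw [if_pos hc]
    exact aux_int lam hlam ℓ h0 hc.le
  · rw [if_neg hc]
    push_neg at hc
    have hsplit : (∫ t in (0:ℝ)..ℓ, max (1 - t / lam) 0)
        = (∫ t in (0:ℝ)..lam, max (1 - t / lam) 0)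
          + ∫ t in lam..ℓ, max (1 - t / lam) 0 := by
      rw [intervalIntegral.integral_add_adjacent_intervals]
      · apply Continuous.intervalIntegrable
        continuity
      · apply Continuous.intervalIntegrable
        continuity
    rw [hsplit, aux_int lam hlam lam hlam.le le_rfl]
    have hzero : (∫ t in lam..ℓ, max (1 - t / lam) 0) = 0 := by
      rw [intervalIntegral.integral_congr (g := fun _ => (0:ℝ))]
      · simp
      · intro t ht
        rw [Set.uIcc_of_le hc] at ht
        have : 1 ≤ t / lam := by
          rw [le_div_iff₀ hlam]; linarith [ht.1]
        simp [max_eq_right]; linarith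
    rw [hzero]
    field_simp
    ring
end

section
/- Let λ > 0 and γ > 0, and define the mixture self-paced regularizer f^M(v,λ,γ) = γ²/(v + γ/λ). For every ℓ > 0, the minimizer over [0,1] of v ↦ vℓ + f^M(v,λ,γ) is: v = 1 if ℓ ≤ (λγ/(λ+γ))², v = 0 if ℓ ≥ λ², and v = γ(1/√ℓ − 1/λ) if (λγ/(λ+γ))² < ℓ < λ². -/
/-- The mixture self-paced regularizer `f^M(v,λ,γ) = γ²/(v + γ/λ)`: for
`ℓ > 0`, the minimizer over `[0,1]` of `v ↦ vℓ + f^M(v,λ,γ)` is `1` if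
`ℓ ≤ (λγ/(λ+γ))²`, `0` if `ℓ ≥ λ²`, and `γ(1/√ℓ - 1/λ)` in between. -/
theorem mixture_sp_regularizer_optimal_weight
    (lam gam : ℝ) (hlam : 0 < lam) (hgam : 0 < gam) (ℓ : ℝ) (hℓ : 0 < ℓ) :
    (ℓ ≤ (lam * gam / (lam + gam)) ^ 2 →
      IsMinOn (fun v : ℝ => v * ℓ + gam ^ 2 / (v + gam / lam))
        (Set.Icc (0 : ℝ) 1) 1) ∧
    (lam ^ 2 ≤ ℓ →
      IsMinOn (fun v : ℝ => v * ℓ + gam ^ 2 / (v + gam / lam))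
        (Set.Icc (0 : ℝ) 1) 0) ∧
    ((lam * gam / (lam + gam)) ^ 2 < ℓ → ℓ < lam ^ 2 →
      IsMinOn (fun v : ℝ => v * ℓ + gam ^ 2 / (v + gam / lam))
        (Set.Icc (0 : ℝ) 1) (gam * (1 / Real.sqrt ℓ - 1 / lam))) := by
  have hlg : 0 < lam + gam := by linarith
  refine ⟨?_, ?_, ?_⟩
  · intro h
    rw [isMinOn_iff]
    rintro v ⟨hv0, hv1⟩
    have hvc : 0 < v + gam / lam := by positivity
    have h1c : 0 < 1 + gam / lam := by positivity
    have h' : ℓ * (lam + gam) ^ 2 ≤ (lam * gam) ^ 2 := by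
      rw [div_pow, le_div_iff₀ (by positivity)] at h
      linarith
    rw [← sub_nonneg]
    have key : v * ℓ + gam ^ 2 / (v + gam / lam) - (1 * ℓ + gam ^ 2 / (1 + gam / lam))
        = ((1 - v) * (gam ^ 2 * lam ^ 2 - ℓ * (v * lam + gam) * (lam + gam)))
          / ((v * lam + gam) * (lam + gam)) := by
      field_simp
      ring
    rw [key]
    have hnum : 0 ≤ gam ^ 2 * lam ^ 2 - ℓ * (v * lam + gam) * (lam + gam) := by
      nlinarith [mul_nonneg (mul_nonneg (mul_nonneg hℓ.le hlg.le) hlam.le)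
        (sub_nonneg.mpr hv1)]
    exact div_nonneg (mul_nonneg (by linarith) hnum)
      (by positivity)
  · intro h
    rw [isMinOn_iff]
    rintro v ⟨hv0, hv1⟩
    have hvc : 0 < v + gam / lam := by positivity
    rw [← sub_nonneg]
    have key : v * ℓ + gam ^ 2 / (v + gam / lam) - (0 * ℓ + gam ^ 2 / (0 + gam / lam))
        = (v * (ℓ * (v * lam + gam) - gam * lam ^ 2)) / ((v * lam + gam)) := by
      field_simp
      ring
    rw [key]
    have hnum : 0 ≤ ℓ * (v * lam + gam) - gam * lam ^ 2 := by
      nlinarith [mul_nonneg (sub_nonneg.mpr h) (by positivity : (0:ℝ) ≤ v * lam + gam),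
        mul_nonneg hv0 (pow_pos hlam 3).le]
    exact div_nonneg (mul_nonneg hv0 hnum) (by positivity)
  · intro h1 h2
    rw [isMinOn_iff]
    rintro v ⟨hv0, hv1⟩
    set s := Real.sqrt ℓ with hs
    have hspos : 0 < s := Real.sqrt_pos.mpr hℓ
    have hs2 : s ^ 2 = ℓ := Real.sq_sqrt hℓ.le
    have hvc : 0 < v + gam / lam := by positivity
    have hmin : gam * (1 / s - 1 / lam) + gam / lam = gam / s := by ring
    rw [← sub_nonneg]
    have key : v * ℓ + gam ^ 2 / (v + gam / lam)
        - (gam * (1 / s - 1 / lam) * ℓ + gam ^ 2 / (gam * (1 / s - 1 / lam) + gam / lam))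
        = (v * s * lam - gam * (lam - s)) ^ 2 / ((v * lam + gam) * lam) := by
      rw [hmin, ← hs2]
      field_simp
      ring
    rw [key]
    positivity
end

section
/- Let λ > 0 and α > 0, and define f^LOG(v,λ,α) = (1/α)·((1+αλ)·log((1+αλ)/v) − (1+αλ) + v). For every ℓ ≥ 0, the unique minimizer over (0,1] of v ↦ vℓ + f^LOG(v,λ,α) is v = 1 if ℓ ≤ λ and v = (1+αλ)/(1+αℓ) if ℓ > λ. -/
/-- The optimal weight of the LOG self-paced regularizer: for `ℓ ≥ 0`, the
unique minimizer over `(0,1]` of `v ↦ vℓ + f^LOG(v,λ,α)` is `1` if `ℓ ≤ λ`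
and `(1+αλ)/(1+αℓ)` if `ℓ > λ`. -/
theorem log_sp_regularizer_optimal_weight
    (lam α : ℝ) (hlam : 0 < lam) (hα : 0 < α) (ℓ : ℝ) (hℓ : 0 ≤ ℓ) :
    (if ℓ ≤ lam then (1 : ℝ) else (1 + α * lam) / (1 + α * ℓ)) ∈
      Set.Ioc (0 : ℝ) 1 ∧
    IsMinOn
      (fun v : ℝ => v * ℓ +
        (1 / α) * ((1 + α * lam) * Real.log ((1 + α * lam) / v)
          - (1 + α * lam) + v))
      (Set.Ioc (0 : ℝ) 1)
      (if ℓ ≤ lam then (1 : ℝ) else (1 + α * lam) / (1 + α * ℓ)) ∧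
    (∀ u ∈ Set.Ioc (0 : ℝ) 1,
      IsMinOn
        (fun v : ℝ => v * ℓ +
          (1 / α) * ((1 + α * lam) * Real.log ((1 + α * lam) / v)
            - (1 + α * lam) + v))
        (Set.Ioc (0 : ℝ) 1) u →
      u = if ℓ ≤ lam then (1 : ℝ) else (1 + α * lam) / (1 + α * ℓ)) := by
  have hc : (0:ℝ) < 1 + α * lam := by nlinarith
  have hd : (0:ℝ) < 1 + α * ℓ := by nlinarith [mul_nonneg hα.le hℓ]
  set g : ℝ → ℝ := fun v : ℝ => v * ℓ +
        (1 / α) * ((1 + α * lam) * Real.log ((1 + α * lam) / v)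
          - (1 + α * lam) + v) with hg
  set w : ℝ := if ℓ ≤ lam then (1 : ℝ) else (1 + α * lam) / (1 + α * ℓ) with hw
  have hwmem : w ∈ Set.Ioc (0:ℝ) 1 := by
    rw [hw]
    split_ifs with h
    · exact ⟨one_pos, le_refl 1⟩
    · constructor
      · exact div_pos hc hd
      · rw [div_le_one hd]; nlinarith [not_le.mp h]
  have hstrict : ∀ v ∈ Set.Ioc (0:ℝ) 1, v ≠ w → g w < g v := by
    rintro v ⟨hv0, hv1⟩ hne
    by_cases hcase : ℓ ≤ lam
    · have hw1 : w = 1 := by rw [hw, if_pos hcase]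
      rw [hw1]
      rw [hw1] at hne
      have hlog : Real.log v < v - 1 := Real.log_lt_sub_one_of_pos hv0 hne
      have key : g v - g 1 = ((1 + α * lam)/α) * (v - 1 - Real.log v)
          + (v - 1) * (ℓ - lam) := by
        simp only [hg]
        rw [Real.log_div hc.ne' hv0.ne', div_one]
        field_simp
        ring
      have h1 : 0 < ((1 + α * lam)/α) * (v - 1 - Real.log v) :=
        mul_pos (div_pos hc hα) (by linarith)
      have h2 : 0 ≤ (1 - v) * (lam - ℓ) :=
        mul_nonneg (by linarith) (by linarith)
      have hkey2 : 0 < g v - g 1 := by rw [key]; nlinarith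
      linarith
    · push_neg at hcase
      have hw2 : w = (1 + α * lam) / (1 + α * ℓ) := by
        rw [hw, if_neg (not_le.mpr hcase)]
      rw [hw2]; rw [hw2] at hne
      set t : ℝ := v * (1 + α * ℓ) / (1 + α * lam) with ht_def
      have ht0 : 0 < t := div_pos (mul_pos hv0 hd) hc
      have ht1 : t ≠ 1 := by
        intro h
        apply hne
        field_simp [ht_def] at h
        field_simp
        rw [ht_def, div_eq_one_iff_eq hc.ne'] at h
        linarith
      have hlog : Real.log t < t - 1 := Real.log_lt_sub_one_of_pos ht0 ht1
      have hlogt : Real.log t = Real.log v + Real.log (1 + α * ℓ)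
          - Real.log (1 + α * lam) := by
        rw [ht_def, Real.log_div (mul_pos hv0 hd).ne' hc.ne',
          Real.log_mul hv0.ne' hd.ne']
      have hcw : (1 + α * lam) / ((1 + α * lam) / (1 + α * ℓ)) = 1 + α * ℓ := by
        field_simp
      have key : g v - g ((1 + α * lam) / (1 + α * ℓ)) =
          ((1 + α * lam)/α) * (t - 1 - Real.log t) := by
        simp only [hg]
        rw [Real.log_div hc.ne' hv0.ne', hcw, hlogt, ht_def]
        field_simp
        ring
      have h1 : 0 < ((1 + α * lam)/α) * (t - 1 - Real.log t) :=
        mul_pos (div_pos hc hα) (by linarith)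
      linarith
  refine ⟨hwmem, ?_, ?_⟩
  · rw [isMinOn_iff]
    intro v hv
    rcases eq_or_ne v w with h | h
    · rw [h]
    · exact (hstrict v hv h).le
  · intro u hu hmin
    by_contra hne
    have h1 := hstrict u hu hne
    have h2 := isMinOn_iff.mp hmin w hwmem
    linarith
end

section
/- Let λ > 0 and α > 0, and define f^EXP(v,λ,α) = (1/α)·(v·log(v/exp(αλ)) − v + exp(αλ)). For every ℓ ≥ 0, the unique minimizer over (0,1] of v ↦ vℓ + f^EXP(v,λ,α) is v = 1 if ℓ ≤ λ and v = exp(−α(ℓ−λ)) if ℓ > λ. -/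
/-- Strict convexity inequality: for `v w > 0`, `v ≠ w`,
`0 < v log v - v log w - v + w`. -/
lemma exp_sp_aux_strict (v w : ℝ) (hv : 0 < v) (hw : 0 < w) (hne : v ≠ w) :
    0 < v * Real.log v - v * Real.log w - v + w := by
  have hne' : w / v ≠ 1 := by
    intro h
    exact hne ((div_eq_one_iff_eq hv.ne').mp h).symm
  have h := Real.log_lt_sub_one_of_pos (div_pos hw hv) hne'
  rw [Real.log_div hw.ne' hv.ne'] at h
  have hdv : v * (w / v) = w := by field_simp
  nlinarith [mul_lt_mul_of_pos_left h hv]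

lemma exp_sp_aux (v w : ℝ) (hv : 0 < v) (hw : 0 < w) :
    0 ≤ v * Real.log v - v * Real.log w - v + w := by
  rcases eq_or_ne v w with rfl | hne
  · simp
  · exact (exp_sp_aux_strict v w hv hw hne).le

/-- The optimal weight of the EXP self-paced regularizer: for `ℓ ≥ 0`, the
unique minimizer over `(0,1]` of `v ↦ vℓ + f^EXP(v,λ,α)` is `1` if `ℓ ≤ λ`
and `exp(-α(ℓ-λ))` if `ℓ > λ`. -/
theorem exp_sp_regularizer_optimal_weight
    (lam α : ℝ) (hlam : 0 < lam) (hα : 0 < α) (ℓ : ℝ) (hℓ : 0 ≤ ℓ) :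
    (if ℓ ≤ lam then (1 : ℝ) else Real.exp (-(α * (ℓ - lam)))) ∈
      Set.Ioc (0 : ℝ) 1 ∧
    IsMinOn
      (fun v : ℝ => v * ℓ +
        (1 / α) * (v * Real.log (v / Real.exp (α * lam))
          - v + Real.exp (α * lam)))
      (Set.Ioc (0 : ℝ) 1)
      (if ℓ ≤ lam then (1 : ℝ) else Real.exp (-(α * (ℓ - lam)))) ∧
    (∀ u ∈ Set.Ioc (0 : ℝ) 1,
      IsMinOn
        (fun v : ℝ => v * ℓ +
          (1 / α) * (v * Real.log (v / Real.exp (α * lam))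
            - v + Real.exp (α * lam)))
        (Set.Ioc (0 : ℝ) 1) u →
      u = if ℓ ≤ lam then (1 : ℝ) else Real.exp (-(α * (ℓ - lam)))) := by
  set F : ℝ → ℝ := fun v : ℝ => v * ℓ +
      (1 / α) * (v * Real.log (v / Real.exp (α * lam))
        - v + Real.exp (α * lam)) with hF
  set w : ℝ := if ℓ ≤ lam then (1 : ℝ) else Real.exp (-(α * (ℓ - lam))) with hwdef
  have hw0 : 0 < w := by
    rw [hwdef]; split_ifs
    · exact one_pos
    · exact Real.exp_pos _
  have hw1 : w ≤ 1 := by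
    rw [hwdef]; split_ifs with h
    · exact le_refl 1
    · rw [Real.exp_le_one_iff]
      push_neg at h
      nlinarith
  have hwmem : w ∈ Set.Ioc (0 : ℝ) 1 := ⟨hw0, hw1⟩
  have hlogE : ∀ v : ℝ, 0 < v →
      Real.log (v / Real.exp (α * lam)) = Real.log v - α * lam := by
    intro v hv
    rw [Real.log_div hv.ne' (Real.exp_pos _).ne', Real.log_exp]
  -- strict comparison
  have key : ∀ v ∈ Set.Ioc (0 : ℝ) 1, v ≠ w → F w < F v := by
    intro v hv hne
    obtain ⟨hv0, hv1⟩ := hv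
    have haux := exp_sp_aux_strict v w hv0 hw0 hne
    have h1α : (0:ℝ) < 1 / α := by positivity
    simp only [hF]
    rw [hlogE v hv0, hlogE w hw0]
    have e1 : (1 / α) * (α * ((ℓ - lam) * v)) = (ℓ - lam) * v := by field_simp
    have e2 : (1 / α) * (α * (lam * v)) = lam * v := by field_simp
    have e3 : (1 / α) * (α * (ℓ * w)) = ℓ * w := by field_simp
    have e0 : (1 / α) * (α * lam) = lam := by field_simp
    by_cases hc : ℓ ≤ lam
    · have hweq : w = 1 := by rw [hwdef, if_pos hc]
      rw [hweq] at haux ⊢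
      rw [Real.log_one] at haux ⊢
      have h2 : 0 ≤ (1 - v) * (lam - ℓ) := by nlinarith
      nlinarith [mul_pos h1α haux, h2, e0, e2]
    · have hweq : w = Real.exp (-(α * (ℓ - lam))) := by rw [hwdef, if_neg hc]
      have hlogw : Real.log w = -(α * (ℓ - lam)) := by rw [hweq, Real.log_exp]
      rw [hlogw] at haux ⊢
      nlinarith [mul_pos h1α haux, e1, e2, e3]
  have hmin : IsMinOn F (Set.Ioc (0 : ℝ) 1) w := by
    rw [isMinOn_iff]
    intro v hv
    rcases eq_or_ne v w with rfl | hne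
    · exact le_refl _
    · exact (key v hv hne).le
  refine ⟨hwmem, hmin, ?_⟩
  intro u hu humin
  by_contra hne
  have h1 := key u hu hne
  have h2 := isMinOn_iff.mp humin w hwmem
  exact absurd h2 (not_le.mpr h1)
end

section
/- Let λ > 0 and α > 0, and let v*(t) = 1 for 0 ≤ t ≤ λ and v*(t) = exp(−α(t−λ)) for t > λ. Then for every ℓ ≥ 0, ∫₀^ℓ v*(t) dt equals ℓ if ℓ ≤ λ, and equals λ + (1/α)·(1 − exp(−α(ℓ−λ))) if ℓ > λ. In particular, for ℓ > λ this latent loss equals the exponential penalty (1/γ)·(1 − exp(−αℓ)) with 1/γ = exp(αλ)/α, plus a constant independent of ℓ. -/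
open MeasureTheory

lemma exp_int (lam α : ℝ) (hα : 0 < α) (a b : ℝ) :
    (∫ t in a..b, Real.exp (-(α * (t - lam)))) =
      (1/α) * (Real.exp (-(α * (a - lam))) - Real.exp (-(α * (b - lam)))) := by
  have h : ∀ t ∈ Set.uIcc a b,
      HasDerivAt (fun t => -(1/α) * Real.exp (-(α * (t - lam))))
        (Real.exp (-(α * (t - lam)))) t := by
    intro t _
    have h1 : HasDerivAt (fun t : ℝ => -(α * (t - lam))) (-α) t := by
      have := ((hasDerivAt_id t).sub_const lam).const_mul α
      simpa using this.const_mul (-1)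
    have h2 := h1.exp
    have h3 := h2.const_mul (-(1/α))
    refine h3.congr_deriv ?_
    linear_combination (Real.exp (-(α * (t - lam)))) * mul_inv_cancel₀ hα.ne'
  have hcont : IntervalIntegrable (fun t => Real.exp (-(α * (t - lam)))) volume a b := by
    apply Continuous.intervalIntegrable
    continuity
  rw [intervalIntegral.integral_eq_sub_of_hasDerivAt h hcont]
  ring

/-- The latent SPL loss of the EXP self-paced regularizer:
`∫₀^ℓ v*(t) dt = ℓ` if `ℓ ≤ λ`, and `= λ + (1/α)(1 - exp(-α(ℓ-λ)))` if
`ℓ > λ`; in the latter case it equals the exponential penalty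
`(exp(αλ)/α)(1 - exp(-αℓ))` plus a constant independent of `ℓ`. -/
theorem exp_sp_latent_loss
    (lam α : ℝ) (hlam : 0 < lam) (hα : 0 < α)
    (vstar : ℝ → ℝ)
    (hv : ∀ t, vstar t = if t ≤ lam then 1 else Real.exp (-(α * (t - lam)))) :
    (∀ ℓ : ℝ, 0 ≤ ℓ →
      (∫ t in (0 : ℝ)..ℓ, vstar t) =
        if ℓ ≤ lam then ℓ
        else lam + (1 / α) * (1 - Real.exp (-(α * (ℓ - lam))))) ∧
    (∃ C : ℝ, ∀ ℓ : ℝ, lam < ℓ →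
      (∫ t in (0 : ℝ)..ℓ, vstar t) =
        (Real.exp (α * lam) / α) * (1 - Real.exp (-(α * ℓ))) + C) := by
  have key : ∀ ℓ : ℝ, 0 ≤ ℓ →
      (∫ t in (0 : ℝ)..ℓ, vstar t) =
        if ℓ ≤ lam then ℓ
        else lam + (1 / α) * (1 - Real.exp (-(α * (ℓ - lam)))) := by
    intro ℓ hℓ
    by_cases hc : ℓ ≤ lam
    · rw [if_pos hc]
      have : (∫ t in (0 : ℝ)..ℓ, vstar t) = ∫ t in (0 : ℝ)..ℓ, (1 : ℝ) := by
        apply intervalIntegral.integral_congr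
        intro t ht
        rw [Set.uIcc_of_le hℓ] at ht
        rw [hv t, if_pos (ht.2.trans hc)]
      simp [this]
    · push_neg at hc
      rw [if_neg (not_le.mpr hc)]
      have h1 : (∫ t in (0 : ℝ)..lam, vstar t) = lam := by
        have : (∫ t in (0 : ℝ)..lam, vstar t) = ∫ t in (0 : ℝ)..lam, (1 : ℝ) := by
          apply intervalIntegral.integral_congr
          intro t ht
          rw [Set.uIcc_of_le hlam.le] at ht
          rw [hv t, if_pos ht.2]
        simp [this]
      have h2 : (∫ t in lam..ℓ, vstar t) =
          ∫ t in lam..ℓ, Real.exp (-(α * (t - lam))) := by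
        apply intervalIntegral.integral_congr
        intro t ht
        rw [Set.uIcc_of_le hc.le] at ht
        rw [hv t]
        rcases eq_or_lt_of_le ht.1 with h | h
        · rw [if_pos h.symm.le, ← h]; simp
        · rw [if_neg (not_le.mpr h)]
      have hi1 : IntervalIntegrable vstar volume 0 lam := by
        apply (intervalIntegrable_const (c := (1:ℝ))).congr
        intro t ht
        rw [Set.uIoc_of_le hlam.le] at ht
        rw [hv t, if_pos ht.2]
      have hi2 : IntervalIntegrable vstar volume lam ℓ := by
        apply ((Continuous.intervalIntegrable (by continuity :
          Continuous fun t => Real.exp (-(α * (t - lam)))) lam ℓ)).congr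
        intro t ht
        rw [Set.uIoc_of_le hc.le] at ht
        rw [hv t, if_neg (not_le.mpr ht.1)]
      rw [← intervalIntegral.integral_add_adjacent_intervals hi1 hi2, h1, h2,
        exp_int lam α hα]
      simp
  refine ⟨key, ⟨lam + 1/α - Real.exp (α * lam)/α, fun ℓ hℓ => ?_⟩⟩
  rw [key ℓ (hlam.le.trans hℓ.le), if_neg (not_le.mpr hℓ)]
  have : Real.exp (-(α * (ℓ - lam))) = Real.exp (α * lam) * Real.exp (-(α * ℓ)) := by
    rw [← Real.exp_add]; ring_nf
  rw [this]; field_simp; ring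
end

section
/- Let v : ℝ → ℝ be nonnegative and antitone on [0,∞), and define F(ℓ) = ∫₀^ℓ v(t) dt for ℓ ≥ 0. Let W be any set, let ℓ₁,…,ℓₙ : W → [0,∞) be loss functions, and let w₀, w₁ ∈ W satisfy ∑_{i=1}^n v(ℓᵢ(w₀))·ℓᵢ(w₁) ≤ ∑_{i=1}^n v(ℓᵢ(w₀))·ℓᵢ(w₀) (i.e., w₁ does not increase the weighted loss with weights v(ℓᵢ(w₀))). Then ∑_{i=1}^n F(ℓᵢ(w₁)) ≤ ∑_{i=1}^n F(ℓᵢ(w₀)). -/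
open MeasureTheory

lemma spl_gradient_ineq (v : ℝ → ℝ)
    (hv_antitone : AntitoneOn v (Set.Ici (0 : ℝ)))
    (a b : ℝ) (ha : 0 ≤ a) (hb : 0 ≤ b) :
    (∫ t in (0 : ℝ)..b, v t) - (∫ t in (0 : ℝ)..a, v t) ≤ v a * (b - a) := by
  have hint : ∀ x y : ℝ, 0 ≤ x → 0 ≤ y → IntervalIntegrable v MeasureTheory.volume x y := by
    intro x y hx hy
    exact (hv_antitone.mono (fun t ht => le_trans (le_min hx hy) ht.1)).intervalIntegrable
  have hsub : (∫ t in (0 : ℝ)..b, v t) - (∫ t in (0 : ℝ)..a, v t) = ∫ t in a..b, v t :=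
    intervalIntegral.integral_interval_sub_left (hint 0 b le_rfl hb) (hint 0 a le_rfl ha)
  rw [hsub]
  rcases le_total a b with hab | hab
  · calc (∫ t in a..b, v t) ≤ ∫ t in a..b, v a := by
          apply intervalIntegral.integral_mono_on hab (hint a b ha hb)
            intervalIntegrable_const
          intro x hx
          exact hv_antitone ha (le_trans ha hx.1) hx.1
        _ = v a * (b - a) := by simp [intervalIntegral.integral_const, mul_comm]
  · have : (∫ t in b..a, v t) ≥ ∫ t in b..a, v a := by
      apply intervalIntegral.integral_mono_on hab intervalIntegrable_const (hint b a hb ha)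
      intro x hx
      exact hv_antitone (le_trans hb hx.1) ha hx.2
    rw [intervalIntegral.integral_symm b a]
    simp only [intervalIntegral.integral_const, smul_eq_mul] at this
    nlinarith [this]

/-- MM descent step for SPL: if the update `w₁` does not increase the weighted
loss with weights `v(ℓᵢ(w₀))`, then the latent SPL objective
`∑ᵢ F(ℓᵢ(w))`, with `F(ℓ) = ∫₀^ℓ v(t) dt`, does not increase either. -/
theorem spl_mm_step_descent
    (v : ℝ → ℝ)
    (hv_nonneg : ∀ t ∈ Set.Ici (0 : ℝ), 0 ≤ v t)
    (hv_antitone : AntitoneOn v (Set.Ici (0 : ℝ)))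
    (F : ℝ → ℝ) (hF : ∀ x, F x = ∫ t in (0 : ℝ)..x, v t)
    {W : Type*} (n : ℕ) (ℓ : Fin n → W → ℝ)
    (hℓ_nonneg : ∀ i w, 0 ≤ ℓ i w)
    (w₀ w₁ : W)
    (hstep : ∑ i, v (ℓ i w₀) * ℓ i w₁ ≤ ∑ i, v (ℓ i w₀) * ℓ i w₀) :
    ∑ i, F (ℓ i w₁) ≤ ∑ i, F (ℓ i w₀) := by
  have key : ∀ i : Fin n, F (ℓ i w₁) - F (ℓ i w₀) ≤ v (ℓ i w₀) * (ℓ i w₁ - ℓ i w₀) := by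
    intro i
    rw [hF, hF]
    exact spl_gradient_ineq v hv_antitone _ _ (hℓ_nonneg i w₀) (hℓ_nonneg i w₁)
  have hsum := Finset.sum_le_sum (s := Finset.univ) (fun i _ => key i)
  simp only [Finset.sum_sub_distrib, mul_sub] at hsum
  linarith [hsum, hstep]
end

section
/- Let v : ℝ → ℝ be nonnegative and antitone on [0,∞), and define F(ℓ) = ∫₀^ℓ v(t) dt for ℓ ≥ 0. Let W be any set, let ℓ₁,…,ℓₙ : W → [0,∞) be loss functions, and let (w^k)_{k∈ℕ} be a sequence in W such that for every k, ∑_{i=1}^n v(ℓᵢ(w^k))·ℓᵢ(w^{k+1}) ≤ ∑_{i=1}^n v(ℓᵢ(w^k))·ℓᵢ(w^k). Then the sequence of latent objective values a_k = ∑_{i=1}^n F(ℓᵢ(w^k)) is monotonically nonincreasing, bounded below by 0, and hence convergent. -/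
open MeasureTheory Filter

/-- Convergence of the SPL/MM iteration: if each iterate `w^{k+1}` does not
increase the weighted loss with weights `v(ℓᵢ(w^k))`, then the latent SPL
objective values `a_k = ∑ᵢ F(ℓᵢ(w^k))` form a nonincreasing sequence bounded
below by `0`, hence convergent. -/
theorem spl_mm_iteration_convergence
    (v : ℝ → ℝ)
    (hv_nonneg : ∀ t ∈ Set.Ici (0 : ℝ), 0 ≤ v t)
    (hv_antitone : AntitoneOn v (Set.Ici (0 : ℝ)))
    (F : ℝ → ℝ) (hF : ∀ x, F x = ∫ t in (0 : ℝ)..x, v t)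
    {W : Type*} (n : ℕ) (ℓ : Fin n → W → ℝ)
    (hℓ_nonneg : ∀ i w, 0 ≤ ℓ i w)
    (w : ℕ → W)
    (hstep : ∀ k, ∑ i, v (ℓ i (w k)) * ℓ i (w (k + 1)) ≤
      ∑ i, v (ℓ i (w k)) * ℓ i (w k))
    (a : ℕ → ℝ) (ha : ∀ k, a k = ∑ i, F (ℓ i (w k))) :
    Antitone a ∧ (∀ k, 0 ≤ a k) ∧ ∃ L : ℝ, Tendsto a atTop (nhds L) := by
  have hint : ∀ p q : ℝ, 0 ≤ p → 0 ≤ q → IntervalIntegrable v volume p q :=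
    fun p q hp hq =>
      (hv_antitone.mono (fun t ht => le_trans (le_min hp hq) ht.1)).intervalIntegrable
  -- Key MM majorization inequality
  have key : ∀ x y : ℝ, 0 ≤ x → 0 ≤ y → F y ≤ F x + v x * (y - x) := by
    intro x y hx hy
    rw [hF, hF]
    have hsub : (∫ t in (0:ℝ)..y, v t) - (∫ t in (0:ℝ)..x, v t)
        = ∫ t in x..y, v t := by
      exact intervalIntegral.integral_interval_sub_left
        (hint 0 y le_rfl hy) (hint 0 x le_rfl hx)
    have hle : (∫ t in x..y, v t) ≤ v x * (y - x) := by
      rcases le_total x y with hxy | hxy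
      · have : (∫ t in x..y, v t) ≤ ∫ _t in x..y, v x := by
          apply intervalIntegral.integral_mono_on hxy (hint x y hx hy)
            intervalIntegrable_const
          intro t ht
          exact hv_antitone hx (le_trans hx ht.1) ht.1
        simpa [intervalIntegral.integral_const, mul_comm] using this
      · have : (∫ _t in y..x, v x) ≤ ∫ t in y..x, v t := by
          apply intervalIntegral.integral_mono_on hxy intervalIntegrable_const
            (hint y x hy hx)
          intro t ht
          exact hv_antitone (le_trans hy ht.1) hx ht.2
        have h2 : v x * (x - y) ≤ ∫ t in y..x, v t := by
          simpa [intervalIntegral.integral_const, mul_comm] using this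
        rw [intervalIntegral.integral_symm y x]
        linarith
    linarith
  have hanti : Antitone a := by
    apply antitone_nat_of_succ_le
    intro k
    rw [ha, ha]
    calc ∑ i, F (ℓ i (w (k + 1)))
        ≤ ∑ i, (F (ℓ i (w k)) + v (ℓ i (w k)) * (ℓ i (w (k + 1)) - ℓ i (w k))) := by
          apply Finset.sum_le_sum
          intro i _
          exact key _ _ (hℓ_nonneg i _) (hℓ_nonneg i _)
      _ ≤ ∑ i, F (ℓ i (w k)) := by
          have := hstep k
          simp only [mul_sub] at *
          rw [Finset.sum_add_distrib, Finset.sum_sub_distrib]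
          linarith
  have hpos : ∀ k, 0 ≤ a k := by
    intro k
    rw [ha]
    apply Finset.sum_nonneg
    intro i _
    rw [hF]
    apply intervalIntegral.integral_nonneg (hℓ_nonneg i _)
    intro t ht
    exact hv_nonneg t ht.1
  refine ⟨hanti, hpos, ⟨⨅ k, a k, ?_⟩⟩
  exact tendsto_atTop_ciInf hanti ⟨0, fun x ⟨k, hk⟩ => hk ▸ hpos k⟩
end
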